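/- Let α ∈ (0,1), B > 0, and let p be a probability density on (0,∞) with p(y) = y^{-1-α} for all y ≥ B. Let τ ∈ (0,1], x ∈ ℝ, L > 0, and let f : ℝ → ℝ be bounded and measurable with |f(x + ε·y) − f(x)| ≤ L·y for all y ∈ [0, B·τ^{1/α}] and each sign ε ∈ {+1, −1}. Then for each ε ∈ {+1, −1}: |τ^{-1} ∫₀^∞ (f(x + ε·τ^{1/α}·y) − f(x)) p(y) dy − ∫₀^∞ (f(x + ε·y) − f(x)) y^{-1-α} dy| ≤ C_B · L · τ^{(1/α) − 1}, where C_B = B^{1-α}/(1-α) + ∫₀^B y·p(y) dy. -/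

import Mathlib

open MeasureTheory Set Filter

/-- Scaled form (5.10) of the rate estimate: with `τ = h^α`, for a bounded measurable `f`
that is Lipschitz near `x` with constant `L` (for jumps of either sign of size at most
`B τ^{1/α}`), one has
`|τ^{-1} ∫₀^∞ (f(x ± τ^{1/α} y) − f(x)) p(y) dy − ∫₀^∞ (f(x ± y) − f(x)) y^{-1-α} dy|
   ≤ C_B L τ^{1/α − 1}` with `C_B = B^{1-α}/(1-α) + ∫₀^B y p(y) dy`. -/
theorem stmt_4
    (α B L τ x : ℝ) (hα : α ∈ Set.Ioo (0:ℝ) 1) (hB : 0 < B) (hL : 0 < L)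
    (hτ : τ ∈ Set.Ioc (0:ℝ) 1)
    (p : ℝ → ℝ) (hp_meas : Measurable p)
    (hp_nonneg : ∀ y ∈ Set.Ioi (0:ℝ), 0 ≤ p y)
    (hp_prob : ∫ y in Set.Ioi (0:ℝ), p y = 1)
    (hp_tail : ∀ y : ℝ, B ≤ y → p y = y ^ (-1 - α))
    (f : ℝ → ℝ) (hf_meas : Measurable f)
    (hf_bdd : ∃ M, ∀ y : ℝ, |f y| ≤ M)
    (hf_lip : ∀ ε ∈ ({1, -1} : Set ℝ), ∀ y ∈ Set.Icc (0:ℝ) (B * τ ^ (1/α)),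
        |f (x + ε * y) - f x| ≤ L * y) :
    ∀ ε ∈ ({1, -1} : Set ℝ),
      |τ⁻¹ * (∫ y in Set.Ioi (0:ℝ), (f (x + ε * (τ ^ (1/α) * y)) - f x) * p y)
          - ∫ y in Set.Ioi (0:ℝ), (f (x + ε * y) - f x) * y ^ (-1 - α)|
        ≤ (B ^ (1 - α) / (1 - α) + ∫ y in Set.Ioc (0:ℝ) B, y * p y) * L * τ ^ (1/α - 1) := by
  obtain ⟨hα0, hα1⟩ := hα
  obtain ⟨hτ0, hτ1⟩ := hτ
  obtain ⟨M, hM⟩ := hf_bdd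
  intro ε hε
  set h : ℝ := τ ^ (1/α) with hhdef
  have hh0 : 0 < h := Real.rpow_pos_of_pos hτ0 _
  set g : ℝ → ℝ := fun y => f (x + ε * y) - f x with hgdef
  have hεm : Measurable fun y : ℝ => x + ε * y :=
    measurable_const.add (measurable_const.mul measurable_id)
  have hg_meas : Measurable g := (hf_meas.comp hεm).sub measurable_const
  have hgh_meas : Measurable fun y => g (h * y) :=
    hg_meas.comp (measurable_const.mul measurable_id)
  have hgb : ∀ y, ‖g (h * y)‖ ≤ 2 * M := by
    intro y
    have h1 := hM (x + ε * (h * y)); have h2 := hM x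
    simp only [hgdef, Real.norm_eq_abs]
    calc |f (x + ε * (h * y)) - f x| ≤ |f (x + ε * (h * y))| + |f x| := abs_sub _ _
      _ ≤ 2 * M := by linarith
  have key : ∀ y ∈ Ioc (0:ℝ) B, |g (h * y)| ≤ L * (h * y) := by
    intro y hy
    refine hf_lip ε hε (h * y) ⟨mul_nonneg hh0.le hy.1.le, ?_⟩
    rw [mul_comm B h]
    exact mul_le_mul_of_nonneg_left hy.2 hh0.le
  have hp_int : IntegrableOn p (Ioi (0:ℝ)) := integrable_of_integral_eq_one hp_prob
  have hF1 : IntegrableOn (fun y => g (h * y) * p y) (Ioi (0:ℝ)) :=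
    hp_int.bdd_mul hgh_meas.aestronglyMeasurable (Eventually.of_forall hgb)
  have hral : (-1:ℝ) < -α := by linarith
  have hrint : IntegrableOn (fun y : ℝ => y ^ (-α)) (Ioc (0:ℝ) B) := by
    have := intervalIntegral.intervalIntegrable_rpow' (a := 0) (b := B) hral
    rwa [intervalIntegrable_iff, uIoc_of_le hB.le] at this
  have hrint2 : IntegrableOn (fun y : ℝ => y ^ (-1 - α)) (Ioi B) :=
    integrableOn_Ioi_rpow_of_lt (by linarith) hB
  have hm2 : Measurable fun y : ℝ => y ^ (-1 - α) :=
    by fun_prop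
  have hF2a : IntegrableOn (fun y => g (h * y) * y ^ (-1 - α)) (Ioc (0:ℝ) B) := by
    refine Integrable.mono' (hrint.const_mul (L * h))
      (hgh_meas.mul hm2).aestronglyMeasurable ?_
    filter_upwards [ae_restrict_mem measurableSet_Ioc] with y hy
    have hy0 : (0:ℝ) < y := hy.1
    have hry : (0:ℝ) ≤ y ^ (-1 - α) := Real.rpow_nonneg hy0.le _
    have hyy : y * y ^ (-1 - α) = y ^ (-α) := by
      rw [show -α = 1 + (-1 - α) by ring, Real.rpow_add hy0, Real.rpow_one]
    rw [Real.norm_eq_abs, abs_mul, abs_of_nonneg hry]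
    calc |g (h * y)| * y ^ (-1 - α) ≤ (L * (h * y)) * y ^ (-1 - α) :=
          mul_le_mul_of_nonneg_right (key y hy) hry
      _ = L * h * (y * y ^ (-1 - α)) := by ring
      _ = L * h * y ^ (-α) := by rw [hyy]
  have hF2b : IntegrableOn (fun y => g (h * y) * y ^ (-1 - α)) (Ioi B) :=
    hrint2.bdd_mul hgh_meas.aestronglyMeasurable (Eventually.of_forall hgb)
  have hIoi : Ioc (0:ℝ) B ∪ Ioi B = Ioi (0:ℝ) := Ioc_union_Ioi_eq_Ioi hB.le
  have hF2 : IntegrableOn (fun y => g (h * y) * y ^ (-1 - α)) (Ioi (0:ℝ)) := by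
    rw [← hIoi]; exact hF2a.union hF2b
  -- change of variables
  have h3 : h * h ^ (-1 - α) = τ⁻¹ := by
    rw [show h * h ^ (-1 - α) = h ^ (1 + (-1 - α)) by rw [Real.rpow_add hh0, Real.rpow_one],
      show (1:ℝ) + (-1 - α) = -α by ring, hhdef, ← Real.rpow_mul hτ0.le,
      show 1/α * (-α) = -1 by field_simp, Real.rpow_neg_one]
  have hI2 : (∫ y in Ioi (0:ℝ), g y * y ^ (-1 - α))
      = τ⁻¹ * ∫ y in Ioi (0:ℝ), g (h * y) * y ^ (-1 - α) := by
    have h1 : (∫ y in Ioi (0:ℝ), g (h * y) * (h * y) ^ (-1 - α))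
        = h⁻¹ * ∫ y in Ioi (0:ℝ), g y * y ^ (-1 - α) := by
      have := integral_comp_mul_left_Ioi (fun y => g y * y ^ (-1 - α)) 0 hh0
      rw [mul_zero] at this
      simpa using this
    have h2 : (∫ y in Ioi (0:ℝ), g (h * y) * (h * y) ^ (-1 - α))
        = h ^ (-1 - α) * ∫ y in Ioi (0:ℝ), g (h * y) * y ^ (-1 - α) := by
      rw [← integral_const_mul]
      refine setIntegral_congr_fun measurableSet_Ioi fun y hy => ?_
      rw [Real.mul_rpow hh0.le (le_of_lt hy)]; ring
    calc (∫ y in Ioi (0:ℝ), g y * y ^ (-1 - α))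
        = h * (h⁻¹ * ∫ y in Ioi (0:ℝ), g y * y ^ (-1 - α)) := by
          rw [← mul_assoc, mul_inv_cancel₀ hh0.ne', one_mul]
      _ = h * (h ^ (-1 - α) * ∫ y in Ioi (0:ℝ), g (h * y) * y ^ (-1 - α)) := by
          rw [← h1, h2]
      _ = τ⁻¹ * ∫ y in Ioi (0:ℝ), g (h * y) * y ^ (-1 - α) := by
          rw [← mul_assoc, h3]
  -- reduce to Ioc 0 B
  have hz : ∫ y in Ioi B, (g (h * y) * p y - g (h * y) * y ^ (-1 - α)) = 0 := by
    have he : EqOn (fun y => g (h * y) * p y - g (h * y) * y ^ (-1 - α))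
        (fun _ => (0:ℝ)) (Ioi B) := by
      intro y hy
      simp only [hp_tail y (le_of_lt hy), sub_self]
    rw [setIntegral_congr_fun measurableSet_Ioi he, integral_zero]
  have hsub : ∫ y in Ioi (0:ℝ), (g (h * y) * p y - g (h * y) * y ^ (-1 - α))
      = (∫ y in Ioi (0:ℝ), g (h * y) * p y) - ∫ y in Ioi (0:ℝ), g (h * y) * y ^ (-1 - α) :=
    integral_sub hF1 hF2
  have hsplit : ∫ y in Ioi (0:ℝ), (g (h * y) * p y - g (h * y) * y ^ (-1 - α))
      = ∫ y in Ioc (0:ℝ) B, (g (h * y) * p y - g (h * y) * y ^ (-1 - α)) := by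
    have hu : ∫ y in Ioc (0:ℝ) B ∪ Ioi B, (g (h * y) * p y - g (h * y) * y ^ (-1 - α))
        = (∫ y in Ioc (0:ℝ) B, (g (h * y) * p y - g (h * y) * y ^ (-1 - α)))
          + ∫ y in Ioi B, (g (h * y) * p y - g (h * y) * y ^ (-1 - α)) :=
      setIntegral_union (Ioc_disjoint_Ioi le_rfl) measurableSet_Ioi
        ((hF1.mono_set Ioc_subset_Ioi_self).sub hF2a)
        ((hF1.mono_set (Ioi_subset_Ioi hB.le)).sub hF2b)
    rw [← hIoi, hu, hz, add_zero]
  -- the dominating integrand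
  have hyp_int : IntegrableOn (fun y => y * p y) (Ioc (0:ℝ) B) := by
    refine Integrable.mono' (((hp_int.mono_set Ioc_subset_Ioi_self)).const_mul B)
      (measurable_id.mul hp_meas).aestronglyMeasurable ?_
    filter_upwards [ae_restrict_mem measurableSet_Ioc] with y hy
    have hpy : 0 ≤ p y := hp_nonneg y hy.1
    rw [Real.norm_eq_abs, abs_mul, abs_of_pos hy.1, abs_of_nonneg hpy]
    exact mul_le_mul_of_nonneg_right hy.2 hpy
  have hdom : IntegrableOn (fun y => L * h * (y * p y + y ^ (-α))) (Ioc (0:ℝ) B) :=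
    (hyp_int.add hrint).const_mul (L * h)
  have hbnd : |∫ y in Ioc (0:ℝ) B, (g (h * y) * p y - g (h * y) * y ^ (-1 - α))|
      ≤ ∫ y in Ioc (0:ℝ) B, L * h * (y * p y + y ^ (-α)) := by
    rw [← Real.norm_eq_abs]
    refine norm_integral_le_of_norm_le hdom ?_
    filter_upwards [ae_restrict_mem measurableSet_Ioc] with y hy
    have hy0 : (0:ℝ) < y := hy.1
    have hpy : 0 ≤ p y := hp_nonneg y hy0
    have hry : (0:ℝ) ≤ y ^ (-1 - α) := Real.rpow_nonneg hy0.le _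
    have habs : |p y - y ^ (-1 - α)| ≤ p y + y ^ (-1 - α) :=
      (abs_sub _ _).trans (by rw [abs_of_nonneg hpy, abs_of_nonneg hry])
    have hyy : y * y ^ (-1 - α) = y ^ (-α) := by
      rw [show -α = 1 + (-1 - α) by ring, Real.rpow_add hy0, Real.rpow_one]
    rw [Real.norm_eq_abs, ← mul_sub, abs_mul]
    calc |g (h * y)| * |p y - y ^ (-1 - α)| ≤ (L * (h * y)) * (p y + y ^ (-1 - α)) :=
          mul_le_mul (key y hy) habs (abs_nonneg _) (by positivity)
      _ = L * h * (y * p y + y * y ^ (-1 - α)) := by ring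
      _ = L * h * (y * p y + y ^ (-α)) := by rw [hyy]
  have hrval : ∫ y in Ioc (0:ℝ) B, y ^ (-α) = B ^ (1 - α) / (1 - α) := by
    rw [← intervalIntegral.integral_of_le hB.le, integral_rpow (Or.inl hral),
      Real.zero_rpow (by linarith : -α + 1 ≠ 0), sub_zero,
      show -α + 1 = 1 - α by ring]
  have hfin : ∫ y in Ioc (0:ℝ) B, L * h * (y * p y + y ^ (-α))
      = L * h * ((∫ y in Ioc (0:ℝ) B, y * p y) + B ^ (1 - α) / (1 - α)) := by
    rw [integral_const_mul, integral_add hyp_int hrint, hrval]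
  have hτh : τ ^ (1/α - 1) = h * τ⁻¹ := by
    rw [hhdef, Real.rpow_sub hτ0, Real.rpow_one, div_eq_mul_inv]
  show |τ⁻¹ * (∫ y in Ioi (0:ℝ), g (h * y) * p y)
      - ∫ y in Ioi (0:ℝ), g y * y ^ (-1 - α)|
      ≤ (B ^ (1 - α) / (1 - α) + ∫ y in Ioc (0:ℝ) B, y * p y) * L * τ ^ (1/α - 1)
  rw [hI2, ← mul_sub, ← hsub, hsplit, abs_mul, abs_of_pos (inv_pos.mpr hτ0)]
  calc τ⁻¹ * |∫ y in Ioc (0:ℝ) B, (g (h * y) * p y - g (h * y) * y ^ (-1 - α))|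
      ≤ τ⁻¹ * (L * h * ((∫ y in Ioc (0:ℝ) B, y * p y) + B ^ (1 - α) / (1 - α))) :=
        mul_le_mul_of_nonneg_left (hbnd.trans_eq hfin) (inv_pos.mpr hτ0).le
    _ = (B ^ (1 - α) / (1 - α) + ∫ y in Ioc (0:ℝ) B, y * p y) * L * τ ^ (1/α - 1) := by
        rw [hτh]; ring
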